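/- Let f(W) = (n/2)·log(aW) + (b/W)·Σᵢ(xᵢ − cW)², where a = 4πp(1−p), b = 1/(4p(1−p)), c = 2p − 1, with p ∈ (0,1), n ≥ 1, and Σᵢ xᵢ² > 0. Then f'(W) = −(Σxᵢ²)/(4p(1−p)W²) + n/(2W) + n(2p−1)²/(4p(1−p)), and the unique positive critical point is W* = (Σᵢxᵢ²) / ( n( p(1−p) + √( p²(1−p)² + (1/n)(Σᵢxᵢ²)(2p−1)² ) ) ), which is a local minimum of f. -/

import Mathlib

open Finset

set_option maxHeartbeats 1600000 in
/-- Closed-form MLE for the bandwidth: derivative of the negative log-likelihood,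
    uniqueness of the positive critical point, and the fact that it is a local
    minimum. -/
theorem mle_bandwidth (n : ℕ) (hn : 1 ≤ n) (p : ℝ) (hp : p ∈ Set.Ioo (0 : ℝ) 1)
    (x : Fin n → ℝ) (hS : 0 < ∑ i, x i ^ 2) :
    let a := 4 * Real.pi * p * (1 - p)
    let b := 1 / (4 * p * (1 - p))
    let c := 2 * p - 1
    let f : ℝ → ℝ := fun W => (n / 2 : ℝ) * Real.log (a * W) + (b / W) * ∑ i, (x i - c * W) ^ 2
    let S := ∑ i, x i ^ 2
    let Wstar := S / (n * (p * (1 - p) +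
        Real.sqrt (p ^ 2 * (1 - p) ^ 2 + (1 / n) * S * (2 * p - 1) ^ 2)))
    (∀ W : ℝ, 0 < W →
        deriv f W = -S / (4 * p * (1 - p) * W ^ 2) + n / (2 * W)
          + n * (2 * p - 1) ^ 2 / (4 * p * (1 - p))) ∧
    (0 < Wstar) ∧
    (∀ W : ℝ, 0 < W → (deriv f W = 0 ↔ W = Wstar)) ∧
    IsLocalMin f Wstar := by
  obtain ⟨hp0, hp1⟩ := hp
  have hq : 0 < p * (1 - p) := by nlinarith
  intro a b c f S Wstar
  have hn' : (0:ℝ) < n := by exact_mod_cast Nat.lt_of_lt_of_le Nat.zero_lt_one hn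
  have ha : a = 4 * Real.pi * p * (1 - p) := rfl
  have hb : b = 1 / (4 * p * (1 - p)) := rfl
  have hc : c = 2 * p - 1 := rfl
  have hSdef : S = ∑ i, x i ^ 2 := rfl
  have hS' : 0 < S := hS
  have ha0 : 0 < a := by rw [ha]; have := Real.pi_pos; nlinarith
  set T := ∑ i, x i with hT
  -- rewrite the sum as a polynomial in W
  have hsum : ∀ W : ℝ, ∑ i, (x i - c * W) ^ 2 = S - 2*c*T*W + n*c^2*W^2 := by
    intro W
    have h1 : ∀ i : Fin n, (x i - c * W) ^ 2 = x i ^ 2 - (2*c*W) * x i + c^2*W^2 := by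
      intro i; ring
    rw [Finset.sum_congr rfl fun i _ => h1 i]
    rw [Finset.sum_add_distrib, Finset.sum_sub_distrib, ← Finset.mul_sum,
      Finset.sum_const, card_univ, Fintype.card_fin]
    push_cast
    rw [hSdef, hT]
    ring
  -- derivative
  have hderiv : ∀ W : ℝ, 0 < W → HasDerivAt f
      (-S / (4 * p * (1 - p) * W ^ 2) + n / (2 * W)
          + n * (2 * p - 1) ^ 2 / (4 * p * (1 - p))) W := by
    intro W hW
    have hW0 : W ≠ 0 := ne_of_gt hW
    have haW : a * W ≠ 0 := ne_of_gt (mul_pos ha0 hW)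
    have h1 : HasDerivAt (fun W : ℝ => (n / 2 : ℝ) * Real.log (a * W)) ((n/2) * (1/W)) W := by
      have hlin : HasDerivAt (fun W : ℝ => a * W) a W := by
        simpa using (hasDerivAt_id W).const_mul a
      have hlog := (Real.hasDerivAt_log haW).comp W hlin
      have := hlog.const_mul ((n:ℝ)/2)
      refine this.congr_deriv ?_
      have ha0' : a ≠ 0 := ne_of_gt ha0
      field_simp
    have h2 : HasDerivAt (fun W : ℝ => b / W) (-b / W^2) W := by
      have := (hasDerivAt_inv hW0).const_mul b
      refine this.congr_deriv ?_; simp [div_eq_mul_inv]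
    have h3 : HasDerivAt (fun W : ℝ => S - 2*c*T*W + n*c^2*W^2)
        (-(2*c*T) + n*c^2*(2*W)) W := by
      have hid : HasDerivAt (fun W : ℝ => 2*c*T*W) (2*c*T) W := by
        simpa using (hasDerivAt_id W).const_mul (2*c*T)
      have hA : HasDerivAt (fun W : ℝ => S - 2*c*T*W) (0 - 2*c*T) W :=
        (hasDerivAt_const W S).sub hid
      have hB : HasDerivAt (fun W : ℝ => n*c^2*W^2) ((n*c^2) * (2*W)) W := by
        have := (hasDerivAt_pow 2 W).const_mul ((n:ℝ)*c^2)
        refine this.congr_deriv ?_; push_cast; ring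
      have := hA.add hB
      refine this.congr_deriv ?_; ring
    have h4 : HasDerivAt (fun W : ℝ => (b/W) * (S - 2*c*T*W + n*c^2*W^2))
        ((-b/W^2) * (S - 2*c*T*W + n*c^2*W^2) + (b/W) * (-(2*c*T) + n*c^2*(2*W))) W :=
      h2.mul h3
    have h5 := h1.add h4
    have hfeq : f = fun W : ℝ => (n / 2 : ℝ) * Real.log (a * W)
        + (b/W) * (S - 2*c*T*W + n*c^2*W^2) := by
      funext W; show (n / 2 : ℝ) * Real.log (a * W) + (b / W) * ∑ i, (x i - c * W) ^ 2 = _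
      rw [hsum]
    rw [hfeq]
    refine h5.congr_deriv ?_
    rw [hb, hc]
    have hp0' : p ≠ 0 := ne_of_gt hp0
    have hp1' : (1 - p) ≠ 0 := by linarith
    field_simp [hW0, hp0', hp1']
    ring
  -- set up the square root
  have hWstar_def0 : Wstar = S / (n * (p * (1 - p) +
      Real.sqrt (p ^ 2 * (1 - p) ^ 2 + (1 / n) * S * (2 * p - 1) ^ 2))) := rfl
  clear_value a b c f S Wstar T
  set D := Real.sqrt (p ^ 2 * (1 - p) ^ 2 + (1 / n) * S * (2 * p - 1) ^ 2) with hD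
  have harg : (0:ℝ) ≤ p ^ 2 * (1 - p) ^ 2 + (1 / n) * S * (2 * p - 1) ^ 2 := by positivity
  have hD2 : D ^ 2 = p ^ 2 * (1 - p) ^ 2 + (1 / n) * S * (2 * p - 1) ^ 2 :=
    Real.sq_sqrt harg
  have hD0 : 0 ≤ D := Real.sqrt_nonneg _
  have hK : 0 < p * (1 - p) + D := by linarith
  have hden : 0 < (n:ℝ) * (p * (1 - p) + D) := mul_pos hn' hK
  have hWstar_def : Wstar = S / (n * (p * (1 - p) + D)) := hWstar_def0
  have hWstar_pos : 0 < Wstar := by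
    rw [hWstar_def]; exact div_pos hS' hden
  -- the quadratic equation satisfied by Wstar
  have hn0 : (n:ℝ) ≠ 0 := ne_of_gt hn'
  have hK0 : p * (1 - p) + D ≠ 0 := ne_of_gt hK
  have hD2' : (n:ℝ) * D ^ 2 = n * (p^2*(1-p)^2) + S * (2*p-1)^2 := by
    rw [hD2]; field_simp
  have hmain : c^2*S + (n:ℝ)*(2*(p*(1-p))*(p*(1-p)+D) - (p*(1-p)+D)^2) = 0 := by
    rw [hc]; linear_combination -hD2'
  have hE : c^2 * Wstar^2 + 2 * (p * (1 - p)) * Wstar - S / n = 0 := by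
    have expand : c^2 * Wstar^2 + 2 * (p * (1 - p)) * Wstar - S / n
        = (S/((n:ℝ)^2*(p*(1-p)+D)^2)) *
          (c^2*S + (n:ℝ)*(2*(p*(1-p))*(p*(1-p)+D) - (p*(1-p)+D)^2)) := by
      rw [hWstar_def]; field_simp; ring
    rw [expand, hmain, mul_zero]
  -- factorization of the deriv
  have hfac : ∀ W : ℝ, 0 < W →
      deriv f W = (n / (4 * (p * (1 - p)) * W^2)) *
        (c^2 * W^2 + 2 * (p * (1 - p)) * W - S / n) := by
    intro W hW
    rw [(hderiv W hW).deriv, hc]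
    have hW0 : W ≠ 0 := ne_of_gt hW
    have hp0' : p ≠ 0 := ne_of_gt hp0
    have hp1' : (1 - p) ≠ 0 := ne_of_gt (by linarith)
    field_simp
    ring
  have hfac' : ∀ W : ℝ, 0 < W →
      deriv f W = (n / (4 * (p * (1 - p)) * W^2)) *
        ((W - Wstar) * (c^2 * (W + Wstar) + 2 * (p * (1 - p)))) := by
    intro W hW
    rw [hfac W hW]
    linear_combination ((n:ℝ) / (4 * (p * (1 - p)) * W^2)) * hE
  have hfacpos : ∀ W : ℝ, 0 < W → 0 < c^2 * (W + Wstar) + 2 * (p * (1 - p)) := by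
    intro W hW
    have : 0 ≤ c^2 * (W + Wstar) := mul_nonneg (sq_nonneg c) (le_of_lt (add_pos hW hWstar_pos))
    linarith
  refine ⟨fun W hW => (hderiv W hW).deriv, hWstar_pos, ?_, ?_⟩
  · intro W hW
    constructor
    · intro h0
      rw [hfac' W hW] at h0
      have hcoef : (n:ℝ) / (4 * (p * (1 - p)) * W^2) ≠ 0 :=
        ne_of_gt (div_pos hn' (by nlinarith [pow_pos hW 2]))
      have := (mul_eq_zero.mp h0).resolve_left hcoef
      have := (mul_eq_zero.mp this).resolve_right (ne_of_gt (hfacpos W hW))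
      linarith [sub_eq_zero.mp this]
    · intro h
      rw [h, hfac' Wstar hWstar_pos]
      ring
  · -- local min
    have hanti : AntitoneOn f (Set.Icc (Wstar/2) Wstar) := by
      apply antitoneOn_of_deriv_nonpos (convex_Icc _ _)
      · intro W hW
        have hWp : 0 < W := lt_of_lt_of_le (by linarith) hW.1
        exact (hderiv W hWp).differentiableAt.continuousAt.continuousWithinAt
      · intro W hW
        rw [interior_Icc] at hW
        have hWp : 0 < W := lt_trans (by linarith) hW.1
        exact (hderiv W hWp).differentiableAt.differentiableWithinAt
      · intro W hW
        rw [interior_Icc] at hW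
        have hWp : 0 < W := lt_trans (by linarith) hW.1
        rw [hfac' W hWp]
        have h1 : (0:ℝ) < n / (4 * (p * (1 - p)) * W^2) :=
          div_pos hn' (by nlinarith [pow_pos hWp 2])
        have h2 : (W - Wstar) * (c^2 * (W + Wstar) + 2 * (p * (1 - p))) ≤ 0 :=
          mul_nonpos_of_nonpos_of_nonneg (by linarith [hW.2]) (le_of_lt (hfacpos W hWp))
        exact mul_nonpos_of_nonneg_of_nonpos (le_of_lt h1) h2
    have hmono : MonotoneOn f (Set.Icc Wstar (2*Wstar)) := by
      apply monotoneOn_of_deriv_nonneg (convex_Icc _ _)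
      · intro W hW
        have hWp : 0 < W := lt_of_lt_of_le hWstar_pos hW.1
        exact (hderiv W hWp).differentiableAt.continuousAt.continuousWithinAt
      · intro W hW
        rw [interior_Icc] at hW
        have hWp : 0 < W := lt_trans hWstar_pos hW.1
        exact (hderiv W hWp).differentiableAt.differentiableWithinAt
      · intro W hW
        rw [interior_Icc] at hW
        have hWp : 0 < W := lt_trans hWstar_pos hW.1
        rw [hfac' W hWp]
        have h1 : (0:ℝ) < n / (4 * (p * (1 - p)) * W^2) :=
          div_pos hn' (by nlinarith [pow_pos hWp 2])
        have h2 : 0 ≤ (W - Wstar) * (c^2 * (W + Wstar) + 2 * (p * (1 - p))) :=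
          mul_nonneg (by linarith [hW.1]) (le_of_lt (hfacpos W hWp))
        exact mul_nonneg (le_of_lt h1) h2
    have hmem : Set.Ioo (Wstar/2) (2*Wstar) ∈ nhds Wstar :=
      Ioo_mem_nhds (by linarith) (by linarith)
    filter_upwards [hmem] with y hy
    rcases le_total y Wstar with h | h
    · exact hanti ⟨le_of_lt hy.1, h⟩ ⟨by linarith, le_refl _⟩ h
    · exact hmono ⟨le_refl _, by linarith⟩ ⟨h, le_of_lt hy.2⟩ h
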